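/- Let F ⊆ I_uf, Θ ⊆ ℤ^I, and let S = {s_g : g∈Θ} be a Θ-pointed family such that A^Θ is closed under multiplication. Then the ℤ-submodule frz_F^S A^Θ := ⊕_{g∈Θ} ℤ·frz_{F,g}(s_g) of LP is closed under multiplication. More precisely, if s_{g₁}·s_{g₂} = Σ_{g∈Θ} b^g·s_g is a finite decomposition with integer coefficients, then frz_{F,g₁}(s_{g₁}) · frz_{F,g₂}(s_{g₂}) = Σ_{g∈Θ} b^g·frz_{F,g₁+g₂}(s_g), where each frz_{F,g₁+g₂}(s_g) is either 0 or equal to frz_{F,g}(s_g). -/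

import Mathlib

/-! Common setup. -/

noncomputable section

namespace CAFreeze

variable {I : Type*} [Fintype I] [DecidableEq I]

/-- The Laurent polynomial ring LP = ℤ[x_i^{±1} : i ∈ I], modeled as the group algebra of
ℤ^I over ℤ. -/
abbrev LP (I : Type*) := AddMonoidAlgebra ℤ (I → ℤ)

/-- The monomial x^m for an exponent vector m ∈ ℤ^I. -/
def mono (m : I → ℤ) : LP I := AddMonoidAlgebra.ofCoeff (Finsupp.single m 1)

/-- The coefficient of the monomial x^m in z ∈ LP. -/
def coeff (z : LP I) (m : I → ℤ) : ℤ := (AddMonoidAlgebra.coeff z : (I → ℤ) →₀ ℤ) m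

variable (Iuf : Finset I) (Bt : I → {i // i ∈ Iuf} → ℤ)

/-- The linear map p* : ℤ^{I_uf} → ℤ^I, p*(n) = B̃·n. -/
def pstar (n : {i // i ∈ Iuf} → ℤ) : I → ℤ := fun i => ∑ kk : {i // i ∈ Iuf}, Bt i kk * n kk

/-- p*(n) for n ∈ ℕ^{I_uf}. -/
def pstarN (n : {i // i ∈ Iuf} → ℕ) : I → ℤ := pstar Iuf Bt fun kk => (n kk : ℤ)

/-- supp n = {k ∈ I_uf : n_k ≠ 0}, as a subset of I. -/
def suppn (n : {i // i ∈ Iuf} → ℕ) : Set I := {i | ∃ h : i ∈ Iuf, n ⟨i, h⟩ ≠ 0}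

/-- LP_{⪯m}: the ℤ-submodule of LP spanned by the monomials x^{m+p*(n)}, n ∈ ℕ^{I_uf}. -/
def LPle (m : I → ℤ) : Submodule ℤ (LP I) :=
  Submodule.span ℤ {z : LP I | ∃ n : {i // i ∈ Iuf} → ℕ, z = mono (m + pstarN Iuf Bt n)}

open Classical in
/-- The freezing operator frz_{F,m}: it keeps the monomials x^{m+p*(n)} with
supp n ∩ F = ∅ and kills the monomials x^{m+p*(n)} with supp n ∩ F ≠ ∅. -/
def frz (F : Finset I) (m : I → ℤ) (z : LP I) : LP I :=
  AddMonoidAlgebra.ofCoeff <| Finsupp.filter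
    (fun e => ∃ n : {i // i ∈ Iuf} → ℕ, e = m + pstarN Iuf Bt n ∧ suppn Iuf n ∩ (F : Set I) = ∅) (AddMonoidAlgebra.coeff z)

/-- z ∈ LP is pointed at g: z = Σ_{n ∈ ℕ^{I_uf}} c_n x^{g+p*(n)} with c_0 = 1. -/
def Pointed (g : I → ℤ) (z : LP I) : Prop :=
  coeff z g = 1 ∧
    ∀ e ∈ (AddMonoidAlgebra.coeff z : (I → ℤ) →₀ ℤ).support, ∃ n : {i // i ∈ Iuf} → ℕ, e = g + pstarN Iuf Bt n

/-- supp z = ∪_{c_n ≠ 0} supp n, for a g-pointed z = Σ_n c_n x^{g+p*(n)}. -/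
def suppz (g : I → ℤ) (z : LP I) : Set I :=
  ⋃ n ∈ {n : {i // i ∈ Iuf} → ℕ | coeff z (g + pstarN Iuf Bt n) ≠ 0}, suppn Iuf n

/-- suppDim z ∈ ℕ^{I_uf}: the coordinatewise maximum of {n : c_n ≠ 0}, for a g-pointed
z = Σ_n c_n x^{g+p*(n)}. -/
def suppDim (g : I → ℤ) (z : LP I) : {i // i ∈ Iuf} → ℕ :=
  fun kk => sSup {d : ℕ | ∃ n : {i // i ∈ Iuf} → ℕ, coeff z (g + pstarN Iuf Bt n) ≠ 0 ∧ n kk = d}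

/-! ### Auxiliary lemmas -/

section Aux

set_option linter.unusedSectionVars false

variable {I : Type*} [Fintype I] [DecidableEq I] (Iuf : Finset I) (Bt : I → {i // i ∈ Iuf} → ℤ)

lemma pstar_add (n m : {i // i ∈ Iuf} → ℤ) :
    pstar Iuf Bt (n + m) = pstar Iuf Bt n + pstar Iuf Bt m := by
  funext i
  simp [pstar, mul_add, Finset.sum_add_distrib]

lemma pstarN_add (n m : {i // i ∈ Iuf} → ℕ) :
    pstarN Iuf Bt (n + m) = pstarN Iuf Bt n + pstarN Iuf Bt m := by
  unfold pstarN
  rw [show (fun kk => (((n + m) kk : ℕ) : ℤ))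
      = ((fun kk => ((n kk : ℕ) : ℤ)) + fun kk => ((m kk : ℕ) : ℤ)) by
    funext kk; simp, pstar_add]

lemma pstarN_zero : pstarN Iuf Bt 0 = 0 := by
  unfold pstarN pstar
  funext i
  simp

lemma pstarN_inj (hfull : Function.Injective (pstar Iuf Bt)) :
    Function.Injective (pstarN Iuf Bt) := by
  intro n m h
  have h2 := hfull h
  funext kk
  exact_mod_cast congrFun h2 kk

lemma suppn_add (n m : {i // i ∈ Iuf} → ℕ) :
    suppn Iuf (n + m) = suppn Iuf n ∪ suppn Iuf m := by
  ext i
  simp only [suppn, Set.mem_setOf_eq, Set.mem_union, Pi.add_apply, ne_eq, Nat.add_eq_zero,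
    not_and_or]
  constructor
  · rintro ⟨h, h1 | h1⟩
    exacts [Or.inl ⟨h, h1⟩, Or.inr ⟨h, h1⟩]
  · rintro (⟨h, h1⟩ | ⟨h, h1⟩)
    exacts [⟨h, Or.inl h1⟩, ⟨h, Or.inr h1⟩]

/-- The filtering predicate of the freezing operator. -/
def Qp (F : Finset I) (m e : I → ℤ) : Prop :=
  ∃ n : {i // i ∈ Iuf} → ℕ, e = m + pstarN Iuf Bt n ∧ suppn Iuf n ∩ (F : Set I) = ∅

open Classical in
lemma frz_apply (F : Finset I) (m : I → ℤ) (z : LP I) (e : I → ℤ) :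
    (frz Iuf Bt F m z).coeff e = if Qp Iuf Bt F m e then z.coeff e else 0 := rfl

lemma Qp_iff (hfull : Function.Injective (pstar Iuf Bt)) (F : Finset I) (g : I → ℤ)
    (n : {i // i ∈ Iuf} → ℕ) :
    Qp Iuf Bt F g (g + pstarN Iuf Bt n) ↔ suppn Iuf n ∩ (F : Set I) = ∅ := by
  constructor
  · rintro ⟨m, hm, hmF⟩
    have : m = n := pstarN_inj Iuf Bt hfull (add_left_cancel hm).symm
    subst this
    exact hmF
  · intro h
    exact ⟨n, rfl, h⟩

lemma frz_add (F : Finset I) (m : I → ℤ) (z1 z2 : LP I) :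
    frz Iuf Bt F m (z1 + z2) = frz Iuf Bt F m z1 + frz Iuf Bt F m z2 := by
  ext e
  rw [AddMonoidAlgebra.coeff_add, Finsupp.add_apply, frz_apply, frz_apply, frz_apply,
    AddMonoidAlgebra.coeff_add, Finsupp.add_apply]
  split_ifs <;> simp

lemma frz_smul (F : Finset I) (m : I → ℤ) (a : ℤ) (z : LP I) :
    frz Iuf Bt F m (a • z) = a • frz Iuf Bt F m z := by
  ext e
  rw [AddMonoidAlgebra.coeff_smul_apply, frz_apply, frz_apply, AddMonoidAlgebra.coeff_smul_apply]
  split_ifs <;> simp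

lemma frz_eq_self_of (F : Finset I) (m : I → ℤ) (z : LP I)
    (h : ∀ e, z.coeff e ≠ 0 → Qp Iuf Bt F m e) :
    frz Iuf Bt F m z = z := by
  ext e
  rw [frz_apply]
  split_ifs with hq
  · rfl
  · by_cases h0 : z.coeff e = 0
    · rw [h0]
    · exact absurd (h e h0) hq

lemma frz_eq_zero_of (F : Finset I) (m : I → ℤ) (z : LP I)
    (h : ∀ e, z.coeff e ≠ 0 → ¬ Qp Iuf Bt F m e) :
    frz Iuf Bt F m z = 0 := by
  ext e
  rw [frz_apply, AddMonoidAlgebra.coeff_zero, Finsupp.zero_apply]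
  split_ifs with hq
  · by_contra h0
    exact h e h0 hq
  · rfl

lemma frz_finsupp_sum (F : Finset I) (m : I → ℤ) (b : (I → ℤ) →₀ ℤ) (f : (I → ℤ) → LP I) :
    frz Iuf Bt F m (b.sum fun g a => a • f g) = b.sum fun g a => a • frz Iuf Bt F m (f g) := by
  classical
  rw [Finsupp.sum, Finsupp.sum]
  induction b.support using Finset.induction_on with
  | empty =>
      simp only [Finset.sum_empty]
      exact frz_eq_zero_of Iuf Bt F m 0 (by simp)
  | insert _ _ hnotmem ih =>
      rw [Finset.sum_insert hnotmem, Finset.sum_insert hnotmem, frz_add, frz_smul, ih]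

lemma support_mul_exists {w1 w2 : LP I} {e : I → ℤ} (he : e ∈ (w1 * w2).coeff.support) :
    ∃ e1 ∈ w1.coeff.support, ∃ e2 ∈ w2.coeff.support, e1 + e2 = e := by
  classical
  exact Finset.mem_add.1 (AddMonoidAlgebra.support_coeff_mul_subset w1 w2 he)

lemma frz_mul_good (hfull : Function.Injective (pstar Iuf Bt)) (F : Finset I)
    {g1 g2 : I → ℤ} {w1 w2 : LP I}
    (h1 : ∀ e ∈ w1.coeff.support, ∃ n, e = g1 + pstarN Iuf Bt n ∧ suppn Iuf n ∩ (F : Set I) = ∅)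
    (h2 : ∀ e ∈ w2.coeff.support, ∃ n, e = g2 + pstarN Iuf Bt n ∧ suppn Iuf n ∩ (F : Set I) = ∅) :
    frz Iuf Bt F (g1 + g2) (w1 * w2) = w1 * w2 := by
  apply frz_eq_self_of
  intro e he0
  obtain ⟨e1, he1, e2, he2, rfl⟩ := support_mul_exists (Finsupp.mem_support_iff.2 he0)
  obtain ⟨n1, rfl, hn1⟩ := h1 e1 he1
  obtain ⟨n2, rfl, hn2⟩ := h2 e2 he2
  refine ⟨n1 + n2, by rw [pstarN_add, add_add_add_comm], ?_⟩
  rw [suppn_add, Set.union_inter_distrib_right, hn1, hn2, Set.union_empty]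

lemma frz_mul_bad_left (hfull : Function.Injective (pstar Iuf Bt)) (F : Finset I)
    {g1 g2 : I → ℤ} {w1 w2 : LP I}
    (h1 : ∀ e ∈ w1.coeff.support, ∃ n, e = g1 + pstarN Iuf Bt n ∧ suppn Iuf n ∩ (F : Set I) ≠ ∅)
    (h2 : ∀ e ∈ w2.coeff.support, ∃ n, e = g2 + pstarN Iuf Bt n) :
    frz Iuf Bt F (g1 + g2) (w1 * w2) = 0 := by
  apply frz_eq_zero_of
  intro e he0
  obtain ⟨e1, he1, e2, he2, rfl⟩ := support_mul_exists (Finsupp.mem_support_iff.2 he0)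
  obtain ⟨n1, rfl, hn1⟩ := h1 e1 he1
  obtain ⟨n2, rfl⟩ := h2 e2 he2
  rintro ⟨mm, hm, hmF⟩
  have hre : (g1 + pstarN Iuf Bt n1) + (g2 + pstarN Iuf Bt n2)
      = (g1 + g2) + pstarN Iuf Bt (n1 + n2) := by
    rw [pstarN_add, add_add_add_comm]
  rw [hre] at hm
  have : mm = n1 + n2 := pstarN_inj Iuf Bt hfull (add_left_cancel hm).symm
  subst this
  rw [suppn_add, Set.union_inter_distrib_right] at hmF
  exact hn1 (Set.union_empty_iff.1 hmF).1

lemma frz_mul_bad_right (hfull : Function.Injective (pstar Iuf Bt)) (F : Finset I)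
    {g1 g2 : I → ℤ} {w1 w2 : LP I}
    (h1 : ∀ e ∈ w1.coeff.support, ∃ n, e = g1 + pstarN Iuf Bt n)
    (h2 : ∀ e ∈ w2.coeff.support, ∃ n, e = g2 + pstarN Iuf Bt n ∧ suppn Iuf n ∩ (F : Set I) ≠ ∅) :
    frz Iuf Bt F (g1 + g2) (w1 * w2) = 0 := by
  rw [mul_comm, add_comm g1 g2]
  exact frz_mul_bad_left Iuf Bt hfull F h2 h1

lemma frz_mul (hfull : Function.Injective (pstar Iuf Bt)) (F : Finset I)
    {g1 g2 : I → ℤ} {z1 z2 : LP I}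
    (h1 : ∀ e ∈ z1.coeff.support, ∃ n, e = g1 + pstarN Iuf Bt n)
    (h2 : ∀ e ∈ z2.coeff.support, ∃ n, e = g2 + pstarN Iuf Bt n) :
    frz Iuf Bt F (g1 + g2) (z1 * z2) = frz Iuf Bt F g1 z1 * frz Iuf Bt F g2 z2 := by
  classical
  set a1 := frz Iuf Bt F g1 z1 with ha1
  set a2 := frz Iuf Bt F g2 z2 with ha2
  set r1 := z1 - a1 with hr1
  set r2 := z2 - a2 with hr2
  have ka1 : ∀ e ∈ a1.coeff.support, ∃ n, e = g1 + pstarN Iuf Bt n ∧ suppn Iuf n ∩ (F : Set I) = ∅ := by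
    intro e he
    have he0 := Finsupp.mem_support_iff.1 he
    rw [ha1, frz_apply] at he0
    split_ifs at he0 with hq
    · exact hq
    · exact absurd rfl he0
  have ka2 : ∀ e ∈ a2.coeff.support, ∃ n, e = g2 + pstarN Iuf Bt n ∧ suppn Iuf n ∩ (F : Set I) = ∅ := by
    intro e he
    have he0 := Finsupp.mem_support_iff.1 he
    rw [ha2, frz_apply] at he0
    split_ifs at he0 with hq
    · exact hq
    · exact absurd rfl he0
  have kr1 : ∀ e ∈ r1.coeff.support, ∃ n, e = g1 + pstarN Iuf Bt n ∧ suppn Iuf n ∩ (F : Set I) ≠ ∅ := by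
    intro e he
    have he0 := Finsupp.mem_support_iff.1 he
    have hre : r1.coeff e = z1.coeff e - (if Qp Iuf Bt F g1 e then z1.coeff e else 0) := by
      rw [hr1, AddMonoidAlgebra.coeff_sub, Finsupp.sub_apply, ha1, frz_apply]
    split_ifs at hre with hq
    · rw [sub_self] at hre
      exact absurd hre he0
    · rw [sub_zero] at hre
      obtain ⟨n, hn⟩ := h1 e (Finsupp.mem_support_iff.2 (hre ▸ he0))
      refine ⟨n, hn, fun hF => hq ⟨n, hn, hF⟩⟩
  have kr2 : ∀ e ∈ r2.coeff.support, ∃ n, e = g2 + pstarN Iuf Bt n ∧ suppn Iuf n ∩ (F : Set I) ≠ ∅ := by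
    intro e he
    have he0 := Finsupp.mem_support_iff.1 he
    have hre : r2.coeff e = z2.coeff e - (if Qp Iuf Bt F g2 e then z2.coeff e else 0) := by
      rw [hr2, AddMonoidAlgebra.coeff_sub, Finsupp.sub_apply, ha2, frz_apply]
    split_ifs at hre with hq
    · rw [sub_self] at hre
      exact absurd hre he0
    · rw [sub_zero] at hre
      obtain ⟨n, hn⟩ := h2 e (Finsupp.mem_support_iff.2 (hre ▸ he0))
      refine ⟨n, hn, fun hF => hq ⟨n, hn, hF⟩⟩
  have ka1' : ∀ e ∈ a1.coeff.support, ∃ n, e = g1 + pstarN Iuf Bt n :=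
    fun e he => (ka1 e he).imp fun n hn => hn.1
  have ka2' : ∀ e ∈ a2.coeff.support, ∃ n, e = g2 + pstarN Iuf Bt n :=
    fun e he => (ka2 e he).imp fun n hn => hn.1
  have hz1 : z1 = a1 + r1 := by rw [hr1]; ring
  have hz2 : z2 = a2 + r2 := by rw [hr2]; ring
  calc frz Iuf Bt F (g1 + g2) (z1 * z2)
      = frz Iuf Bt F (g1 + g2) (a1 * a2 + a1 * r2 + (r1 * a2 + r1 * r2)) := by
        rw [hz1, hz2]; congr 1; ring
    _ = a1 * a2 := by
        rw [frz_add, frz_add, frz_add, frz_mul_good Iuf Bt hfull F ka1 ka2,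
          frz_mul_bad_right Iuf Bt hfull F ka1' kr2,
          frz_mul_bad_left Iuf Bt hfull F kr1 ka2',
          frz_mul_bad_left Iuf Bt hfull F kr1 (fun e he => (kr2 e he).imp fun n hn => hn.1),
          add_zero, add_zero, add_zero]

lemma suppn_subset_add (n m : {i // i ∈ Iuf} → ℕ) : suppn Iuf n ⊆ suppn Iuf (n + m) := by
  rw [suppn_add]
  exact Set.subset_union_left

lemma frz_shift (hfull : Function.Injective (pstar Iuf Bt)) (F : Finset I)
    {g g0 : I → ℤ} {z : LP I}
    (hz : ∀ e ∈ z.coeff.support, ∃ n, e = g + pstarN Iuf Bt n)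
    (ν : {i // i ∈ Iuf} → ℕ) (hg : g = g0 + pstarN Iuf Bt ν) :
    frz Iuf Bt F g0 z = 0 ∨ frz Iuf Bt F g0 z = frz Iuf Bt F g z := by
  classical
  by_cases hν : suppn Iuf ν ∩ (F : Set I) = ∅
  · right
    ext e
    rw [frz_apply, frz_apply]
    by_cases h0 : z.coeff e = 0
    · split_ifs <;> simp [h0]
    · obtain ⟨n, rfl⟩ := hz e (Finsupp.mem_support_iff.2 h0)
      have hrepr : g + pstarN Iuf Bt n = g0 + pstarN Iuf Bt (ν + n) := by
        rw [hg, pstarN_add, add_assoc]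
      have hiff : Qp Iuf Bt F g0 (g + pstarN Iuf Bt n) ↔ Qp Iuf Bt F g (g + pstarN Iuf Bt n) := by
        have hL : Qp Iuf Bt F g0 (g + pstarN Iuf Bt n)
            ↔ suppn Iuf (ν + n) ∩ (F : Set I) = ∅ := by
          rw [hrepr]
          exact Qp_iff Iuf Bt hfull F g0 (ν + n)
        rw [hL, Qp_iff Iuf Bt hfull F g n, suppn_add, Set.union_inter_distrib_right, hν,
          Set.empty_union]
      exact if_congr hiff rfl rfl
  · left
    apply frz_eq_zero_of
    intro e he0
    obtain ⟨n, rfl⟩ := hz e (Finsupp.mem_support_iff.2 he0)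
    have hrepr : g + pstarN Iuf Bt n = g0 + pstarN Iuf Bt (ν + n) := by
      rw [hg, pstarN_add, add_assoc]
    rw [hrepr, Qp_iff Iuf Bt hfull F g0 (ν + n)]
    intro hF
    apply hν
    apply Set.subset_empty_iff.1
    calc suppn Iuf ν ∩ (F : Set I) ⊆ suppn Iuf (ν + n) ∩ (F : Set I) :=
        Set.inter_subset_inter_left _ (suppn_subset_add Iuf ν n)
    _ = ∅ := hF

lemma exists_nu (hfull : Function.Injective (pstar Iuf Bt))
    {Θ : Set (I → ℤ)} {s : (I → ℤ) → LP I}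
    (hs : ∀ g ∈ Θ, Pointed Iuf Bt g (s g))
    {g1 g2 : I → ℤ} (hg1 : g1 ∈ Θ) (hg2 : g2 ∈ Θ)
    (b : (I → ℤ) →₀ ℤ) (hbs : (b.support : Set (I → ℤ)) ⊆ Θ)
    (hdecomp : s g1 * s g2 = b.sum fun g a => a • s g) :
    ∀ g, b g ≠ 0 → ∃ ν : {i // i ∈ Iuf} → ℕ, g = (g1 + g2) + pstarN Iuf Bt ν := by
  classical
  intro g hbg
  by_contra hPg
  -- the set of "bad" elements of the support
  set P : (I → ℤ) → Prop := fun g' => ∃ ν, g' = (g1 + g2) + pstarN Iuf Bt ν with hP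
  set Bad : Finset (I → ℤ) := b.support.filter (fun g' => ¬ P g') with hBadDef
  have hprod : ∀ e ∈ (s g1 * s g2).coeff.support, P e := by
    intro e he
    obtain ⟨e1, he1, e2, he2, rfl⟩ := support_mul_exists he
    obtain ⟨n1, rfl⟩ := (hs g1 hg1).2 e1 he1
    obtain ⟨n2, rfl⟩ := (hs g2 hg2).2 e2 he2
    exact ⟨n1 + n2, by rw [pstarN_add, add_add_add_comm]⟩
  have step : ∀ g0 ∈ Bad, ∃ g' ∈ Bad, g0 ≠ g' ∧ ∃ n, g0 = g' + pstarN Iuf Bt n := by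
    intro g0 hg0
    obtain ⟨hg0s, hg0P⟩ := Finset.mem_filter.1 hg0
    have hcoeff0 : (s g1 * s g2).coeff g0 = 0 := by
      by_contra hne
      exact hg0P (hprod g0 (Finsupp.mem_support_iff.2 hne))
    have hsum : ∑ x ∈ b.support, b x * (s x).coeff g0 = 0 := by
      rw [hdecomp, AddMonoidAlgebra.coeff_finsuppSum, Finsupp.sum_apply, Finsupp.sum] at hcoeff0
      exact hcoeff0
    rw [← Finset.add_sum_erase _ _ hg0s] at hsum
    have hcg0 : (s g0).coeff g0 = 1 := (hs g0 (hbs hg0s)).1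
    rw [hcg0, mul_one] at hsum
    have hbg0 : b g0 ≠ 0 := Finsupp.mem_support_iff.1 hg0s
    have hS : ∑ x ∈ b.support.erase g0, b x * (s x).coeff g0 ≠ 0 := by
      intro h0
      rw [h0, add_zero] at hsum
      exact hbg0 hsum
    obtain ⟨g', hg'mem, hterm⟩ := Finset.exists_ne_zero_of_sum_ne_zero hS
    obtain ⟨hg'ne, hg's⟩ := Finset.mem_erase.1 hg'mem
    have hsg' : (s g').coeff g0 ≠ 0 := by
      intro h0
      rw [h0, mul_zero] at hterm
      exact hterm rfl
    obtain ⟨n, hn⟩ := (hs g' (hbs hg's)).2 g0 (Finsupp.mem_support_iff.2 hsg')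
    refine ⟨g', Finset.mem_filter.2 ⟨hg's, ?_⟩, hg'ne.symm, n, hn⟩
    rintro ⟨ν, hν⟩
    exact hg0P ⟨ν + n, by rw [hn, hν, pstarN_add, add_assoc]⟩
  have hgBad : g ∈ Bad := Finset.mem_filter.2 ⟨Finsupp.mem_support_iff.2 hbg, hPg⟩
  -- build an infinite descending chain inside the finite set `Bad`
  have stepT : ∀ x : {x // x ∈ Bad}, ∃ y : {x // x ∈ Bad},
      (x : I → ℤ) ≠ (y : I → ℤ) ∧ ∃ n, (x : I → ℤ) = (y : I → ℤ) + pstarN Iuf Bt n := by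
    rintro ⟨x, hx⟩
    obtain ⟨y, hy, hne, n, hn⟩ := step x hx
    exact ⟨⟨y, hy⟩, hne, n, hn⟩
  choose f hne hex using stepT
  choose nf hnf using hex
  set seq : ℕ → {x // x ∈ Bad} := fun k => f^[k] ⟨g, hgBad⟩ with hseq
  have hchain : ∀ i j : ℕ, i < j →
      ((seq i : I → ℤ) ≠ (seq j : I → ℤ) ∧
        ∃ n, (seq i : I → ℤ) = (seq j : I → ℤ) + pstarN Iuf Bt n) := by
    intro i j hij
    induction j, hij using Nat.le_induction with
    | base =>
        have hit : seq (i + 1) = f (seq i) := by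
          rw [hseq]
          exact Function.iterate_succ_apply' f i _
        rw [hit]
        exact ⟨hne (seq i), nf (seq i), hnf (seq i)⟩
    | succ j hij ih =>
        have hit : seq (j + 1) = f (seq j) := by
          rw [hseq]
          exact Function.iterate_succ_apply' f j _
        obtain ⟨hne1, n, hn⟩ := ih
        have hn' : (seq j : I → ℤ) = (seq (j + 1) : I → ℤ) + pstarN Iuf Bt (nf (seq j)) := by
          rw [hit]
          exact hnf (seq j)
        refine ⟨?_, nf (seq j) + n, ?_⟩
        · intro hEq
          apply hne1
          have key : (seq i : I → ℤ) = (seq i : I → ℤ) + pstarN Iuf Bt (nf (seq j) + n) := by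
            calc (seq i : I → ℤ)
                = (seq (j + 1) : I → ℤ)
                  + (pstarN Iuf Bt (nf (seq j)) + pstarN Iuf Bt n) := by
                  rw [hn, hn', add_assoc]
              _ = (seq i : I → ℤ) + pstarN Iuf Bt (nf (seq j) + n) := by
                  rw [← hEq, pstarN_add]
          have h0 : pstarN Iuf Bt (nf (seq j) + n) = pstarN Iuf Bt 0 := by
            rw [pstarN_zero]
            exact left_eq_add.1 key
          have h00 := pstarN_inj Iuf Bt hfull h0
          have hnz : n = 0 := by
            funext kk
            have hkk := congrFun h00 kk
            simp only [Pi.add_apply, Pi.zero_apply] at hkk ⊢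
            omega
          rw [hn, hnz, pstarN_zero, add_zero]
        · rw [hn, hn', pstarN_add]
          abel
  haveI : Finite {x // x ∈ Bad} := inferInstance
  obtain ⟨i, j, hij, hfe⟩ := Finite.exists_ne_map_eq_of_infinite seq
  rcases Nat.lt_or_ge i j with h | h
  · exact (hchain i j h).1 (congrArg _ hfe)
  · exact (hchain j i (lt_of_le_of_ne h hij.symm)).1 (congrArg _ hfe.symm)

end Aux


/-!
STATEMENT 13: Let F ⊆ I_uf, Θ ⊆ ℤ^I, and let S = {s_g : g∈Θ} be a Θ-pointed family such
that A^Θ is closed under multiplication. Then the ℤ-submodule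
frz_F^S A^Θ := ⊕_{g∈Θ} ℤ·frz_{F,g}(s_g) of LP is closed under multiplication. More
precisely, if s_{g₁}·s_{g₂} = Σ_{g∈Θ} b^g·s_g is a finite decomposition with integer
coefficients, then frz_{F,g₁}(s_{g₁}) · frz_{F,g₂}(s_{g₂}) = Σ_{g∈Θ} b^g·frz_{F,g₁+g₂}(s_g),
where each frz_{F,g₁+g₂}(s_g) is either 0 or equal to frz_{F,g}(s_g).
-/
theorem frz_module_closed_under_mul (hfull : Function.Injective (pstar Iuf Bt))
    (F : Finset I) (hF : F ⊆ Iuf)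
    (Θ : Set (I → ℤ)) (s : (I → ℤ) → LP I)
    (hs : ∀ g ∈ Θ, Pointed Iuf Bt g (s g))
    -- A^Θ is closed under multiplication
    (hclosed : ∀ a ∈ Submodule.span ℤ (s '' Θ), ∀ b ∈ Submodule.span ℤ (s '' Θ),
      a * b ∈ Submodule.span ℤ (s '' Θ)) :
    -- frz_F^S A^Θ is closed under multiplication
    (∀ a ∈ Submodule.span ℤ ((fun g => frz Iuf Bt F g (s g)) '' Θ),
      ∀ b ∈ Submodule.span ℤ ((fun g => frz Iuf Bt F g (s g)) '' Θ),
        a * b ∈ Submodule.span ℤ ((fun g => frz Iuf Bt F g (s g)) '' Θ)) ∧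
    -- more precisely:
    (∀ g₁ ∈ Θ, ∀ g₂ ∈ Θ, ∀ b : (I → ℤ) →₀ ℤ, (b.support : Set (I → ℤ)) ⊆ Θ →
      s g₁ * s g₂ = (b.sum fun g a => a • s g) →
      (frz Iuf Bt F g₁ (s g₁) * frz Iuf Bt F g₂ (s g₂) =
        (b.sum fun g a => a • frz Iuf Bt F (g₁ + g₂) (s g))) ∧
      ∀ g, b g ≠ 0 → frz Iuf Bt F (g₁ + g₂) (s g) = 0 ∨
        frz Iuf Bt F (g₁ + g₂) (s g) = frz Iuf Bt F g (s g)) := by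
  classical
  have main : ∀ g₁ ∈ Θ, ∀ g₂ ∈ Θ, ∀ b : (I → ℤ) →₀ ℤ, (b.support : Set (I → ℤ)) ⊆ Θ →
      s g₁ * s g₂ = (b.sum fun g a => a • s g) →
      (frz Iuf Bt F g₁ (s g₁) * frz Iuf Bt F g₂ (s g₂) =
        (b.sum fun g a => a • frz Iuf Bt F (g₁ + g₂) (s g))) ∧
      ∀ g, b g ≠ 0 → frz Iuf Bt F (g₁ + g₂) (s g) = 0 ∨
        frz Iuf Bt F (g₁ + g₂) (s g) = frz Iuf Bt F g (s g) := by
    intro g1 hg1 g2 hg2 b hbs hdecomp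
    have hnu := exists_nu Iuf Bt hfull hs hg1 hg2 b hbs hdecomp
    constructor
    · rw [← frz_mul Iuf Bt hfull F ((hs g1 hg1).2) ((hs g2 hg2).2), hdecomp,
        frz_finsupp_sum]
    · intro g hbg
      obtain ⟨ν, hν⟩ := hnu g hbg
      exact frz_shift Iuf Bt hfull F
        ((hs g (hbs (Finsupp.mem_support_iff.2 hbg))).2) ν hν
  refine ⟨?_, main⟩
  intro a ha c hc
  refine Submodule.span_induction₂
    (p := fun x y _ _ => x * y ∈ Submodule.span ℤ ((fun g => frz Iuf Bt F g (s g)) '' Θ))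
    ?_ ?_ ?_ ?_ ?_ ?_ ?_ ha hc
  · rintro x y ⟨g1, hg1, rfl⟩ ⟨g2, hg2, rfl⟩
    have hmem : s g1 * s g2 ∈ Submodule.span ℤ (s '' Θ) :=
      hclosed _ (Submodule.subset_span ⟨g1, hg1, rfl⟩) _
        (Submodule.subset_span ⟨g2, hg2, rfl⟩)
    obtain ⟨b, hbsupp, hbsum⟩ := (Finsupp.mem_span_image_iff_linearCombination ℤ).1 hmem
    have hbsupp' : (b.support : Set (I → ℤ)) ⊆ Θ := (Finsupp.mem_supported ℤ b).1 hbsupp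
    rw [Finsupp.linearCombination_apply] at hbsum
    obtain ⟨heq, hor⟩ := main g1 hg1 g2 hg2 b hbsupp' hbsum.symm
    rw [heq, Finsupp.sum]
    apply Submodule.sum_mem
    intro g hgmem
    rcases hor g (Finsupp.mem_support_iff.1 hgmem) with h0 | hEq
    · rw [h0, smul_zero]
      exact Submodule.zero_mem _
    · rw [hEq]
      exact Submodule.smul_mem _ _ (Submodule.subset_span ⟨g, hbsupp' hgmem, rfl⟩)
  · intro y hy
    rw [zero_mul]
    exact Submodule.zero_mem _
  · intro x hx
    rw [mul_zero]
    exact Submodule.zero_mem _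
  · intro x y z hx hy hz h1 h2
    rw [add_mul]
    exact Submodule.add_mem _ h1 h2
  · intro x y z hx hy hz h1 h2
    rw [mul_add]
    exact Submodule.add_mem _ h1 h2
  · intro r x y hx hy h
    rw [smul_mul_assoc]
    exact Submodule.smul_mem _ _ h
  · intro r x y hx hy h
    rw [mul_smul_comm]
    exact Submodule.smul_mem _ _ h

end CAFreeze
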